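/- Fix θ* = 0 and σ² > 0, and let θ̂_r^{(n)} | θ* ~ N(0, σ²/n). Then the replication Bayes factor BF_R^{(n)} = N(θ̂_r^{(n)}; 0, σ²/n)/N(θ̂_r^{(n)}; θ̂_o, σ_o² + σ²/n) converges to ∞ in probability as n → ∞, and more precisely BF_R^{(n)}/√n converges in distribution to a positive random variable; in particular BF_R^{(n)} grows at rate O(√n). -/

import Mathlib

open MeasureTheory ProbabilityTheory Filter Real Topology

noncomputable def nd (x μ τ2 : ℝ) : ℝ :=
  (Real.sqrt (2 * Real.pi * τ2))⁻¹ * Real.exp (-(x - μ) ^ 2 / (2 * τ2))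

noncomputable def G1 (u : ℝ) : ℝ :=
  ((gaussianReal 0 1) {x | x ^ 2 ≤ u}).toReal

lemma nd_measurable (μ τ : ℝ) : Measurable (fun x => nd x μ τ) := by
  unfold nd; fun_prop

lemma nd_ratio (x θ : ℝ) {τ s : ℝ} (hτ : 0 < τ) (hs : 0 < s) :
    nd x 0 τ / nd x θ s =
      Real.sqrt (s / τ) * Real.exp ((x - θ) ^ 2 / (2 * s) - x ^ 2 / (2 * τ)) := by
  have hπ := Real.pi_pos
  have h1 : (0:ℝ) < Real.sqrt (2 * Real.pi * τ) := Real.sqrt_pos.2 (by positivity)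
  have h2 : (0:ℝ) < Real.sqrt (2 * Real.pi * s) := Real.sqrt_pos.2 (by positivity)
  unfold nd
  rw [Real.exp_sub]
  have hx : -(x - 0) ^ 2 / (2 * τ) = -(x ^ 2 / (2 * τ)) := by ring
  have hx2 : -(x - θ) ^ 2 / (2 * s) = -((x - θ) ^ 2 / (2 * s)) := by ring
  rw [hx, hx2, Real.exp_neg, Real.exp_neg]
  field_simp
  rw [← Real.sqrt_mul (by positivity)]
  congr 1
  field_simp

lemma gauss_scale (σ2 : NNReal) {n : ℕ} (hn : 1 ≤ n) :
    gaussianReal 0 (σ2 / n) =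
      (gaussianReal 0 1).map (fun z => Real.sqrt ((σ2 : ℝ) / n) * z) := by
  have h := gaussianReal_map_const_mul (μ := 0) (v := 1) (Real.sqrt ((σ2 : ℝ) / n))
  rw [h]
  congr 1
  · ring
  · ext
    push_cast
    rw [Real.sq_sqrt (by positivity)]
    ring

noncomputable def hseq (θo σo : ℝ) (σ2 : NNReal) (n : ℕ) (z : ℝ) : ℝ :=
  Real.sqrt ((σo ^ 2 + (σ2 : ℝ) / n) / (σ2 : ℝ)) *
    Real.exp ((Real.sqrt ((σ2 : ℝ) / n) * z - θo) ^ 2 / (2 * (σo ^ 2 + (σ2 : ℝ) / n))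
      - z ^ 2 / 2)

noncomputable def glim (θo σo : ℝ) (σ2 : NNReal) (z : ℝ) : ℝ :=
  Real.sqrt (σo ^ 2 / (σ2 : ℝ)) * Real.exp (θo ^ 2 / (2 * σo ^ 2) - z ^ 2 / 2)

lemma ratio_scaled (θo σo : ℝ) (σ2 : NNReal) (hσo : 0 < σo) (hσ2 : 0 < σ2)
    {n : ℕ} (hn : 1 ≤ n) (z : ℝ) :
    (nd (Real.sqrt ((σ2 : ℝ) / n) * z) 0 ((σ2 : ℝ) / n) /
        nd (Real.sqrt ((σ2 : ℝ) / n) * z) θo (σo ^ 2 + (σ2 : ℝ) / n)) / Real.sqrt n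
      = hseq θo σo σ2 n z := by
  have hσ2R : (0:ℝ) < (σ2 : ℝ) := hσ2
  have hnR : (0:ℝ) < (n : ℝ) := by exact_mod_cast hn
  have hτ : (0:ℝ) < (σ2 : ℝ) / n := div_pos hσ2R hnR
  have hs : (0:ℝ) < σo ^ 2 + (σ2 : ℝ) / n := by positivity
  rw [nd_ratio _ _ hτ hs]
  have hx2 : (Real.sqrt ((σ2 : ℝ) / n) * z) ^ 2 / (2 * ((σ2 : ℝ) / n)) = z ^ 2 / 2 := by
    rw [mul_pow, Real.sq_sqrt hτ.le]
    field_simp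
  rw [hx2]
  unfold hseq
  rw [mul_div_right_comm]
  congr 1
  rw [← Real.sqrt_div (by positivity)]
  congr 1
  rw [div_div]
  congr 1
  exact div_mul_cancel₀ _ hnR.ne'

lemma hseq_tendsto (θo σo : ℝ) (σ2 : NNReal) (hσo : 0 < σo) (hσ2 : 0 < σ2) (z : ℝ) :
    Tendsto (fun n : ℕ => hseq θo σo σ2 n z) atTop (𝓝 (glim θo σo σ2 z)) := by
  have hτ0 : Tendsto (fun n : ℕ => (σ2 : ℝ) / n) atTop (𝓝 0) :=
    tendsto_const_div_atTop_nhds_zero_nat _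
  have hs0 : Tendsto (fun n : ℕ => σo ^ 2 + (σ2 : ℝ) / n) atTop (𝓝 (σo ^ 2)) := by
    have := hτ0.const_add (σo ^ 2)
    rwa [add_zero] at this
  have hc0 : Tendsto (fun n : ℕ => Real.sqrt ((σ2 : ℝ) / n)) atTop (𝓝 0) := by
    have := hτ0.sqrt
    rwa [Real.sqrt_zero] at this
  have h1 : Tendsto (fun n : ℕ => Real.sqrt ((σo ^ 2 + (σ2 : ℝ) / n) / (σ2 : ℝ)))
      atTop (𝓝 (Real.sqrt (σo ^ 2 / (σ2 : ℝ)))) :=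
    (hs0.div_const _).sqrt
  have h2 : Tendsto (fun n : ℕ => (Real.sqrt ((σ2 : ℝ) / n) * z - θo) ^ 2
        / (2 * (σo ^ 2 + (σ2 : ℝ) / n)) - z ^ 2 / 2)
      atTop (𝓝 (θo ^ 2 / (2 * σo ^ 2) - z ^ 2 / 2)) := by
    have hnum : Tendsto (fun n : ℕ => (Real.sqrt ((σ2 : ℝ) / n) * z - θo) ^ 2)
        atTop (𝓝 (θo ^ 2)) := by
      have := ((hc0.mul_const z).sub_const θo).pow 2
      simpa using this
    have hden : Tendsto (fun n : ℕ => 2 * (σo ^ 2 + (σ2 : ℝ) / n)) atTop (𝓝 (2 * σo ^ 2)) :=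
      hs0.const_mul 2
    exact (hnum.div hden (by positivity)).sub_const _
  exact h1.mul (Real.continuous_exp.continuousAt.tendsto.comp h2)

lemma glim_continuous (θo σo : ℝ) (σ2 : NNReal) : Continuous (glim θo σo σ2) := by
  unfold glim; fun_prop

lemma hseq_continuous (θo σo : ℝ) (σ2 : NNReal) (n : ℕ) : Continuous (hseq θo σo σ2 n) := by
  unfold hseq; fun_prop

lemma glim_pos (θo σo : ℝ) (σ2 : NNReal) (hσo : 0 < σo) (hσ2 : 0 < σ2) (z : ℝ) :
    0 < glim θo σo σ2 z := by
  have hσ2R : (0:ℝ) < (σ2 : ℝ) := hσ2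
  have h : (0:ℝ) < σo ^ 2 / (σ2 : ℝ) := by positivity
  exact mul_pos (Real.sqrt_pos.2 h) (Real.exp_pos _)

theorem part2 (θo σo : ℝ) (σ2 : NNReal) (hσo : 0 < σo) (hσ2 : 0 < σ2) :
    (∃ μlim : Measure ℝ, IsProbabilityMeasure μlim ∧ μlim {x | 0 < x} = 1 ∧
      ∀ f : BoundedContinuousFunction ℝ ℝ,
        Tendsto (fun n : ℕ =>
            ∫ x, f ((nd x 0 ((σ2 : ℝ) / n) / nd x θo (σo ^ 2 + (σ2 : ℝ) / n)) /
              Real.sqrt n) ∂(gaussianReal 0 (σ2 / n)))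
          atTop (𝓝 (∫ x, f x ∂μlim))) := by
  have hg := glim_continuous θo σo σ2
  refine ⟨(gaussianReal 0 1).map (glim θo σo σ2),
    Measure.isProbabilityMeasure_map hg.measurable.aemeasurable, ?_, ?_⟩
  · have ms : MeasurableSet {x : ℝ | 0 < x} := measurableSet_Ioi
    rw [Measure.map_apply hg.measurable ms]
    have : glim θo σo σ2 ⁻¹' {x | 0 < x} = Set.univ := by
      rw [Set.eq_univ_iff_forall]
      intro z
      exact glim_pos θo σo σ2 hσo hσ2 z
    rw [this, measure_univ]
  · intro f
    have key : Tendsto (fun n : ℕ => ∫ z, f (hseq θo σo σ2 n z) ∂(gaussianReal 0 1)) atTop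
        (𝓝 (∫ z, f (glim θo σo σ2 z) ∂(gaussianReal 0 1))) := by
      refine tendsto_integral_of_dominated_convergence (fun _ => ‖f‖) ?_ ?_ ?_ ?_
      · intro n
        exact (f.continuous.comp (hseq_continuous θo σo σ2 n)).aestronglyMeasurable
      · exact integrable_const _
      · intro n
        exact Eventually.of_forall fun z => f.norm_coe_le_norm _
      · exact Eventually.of_forall fun z =>
          (f.continuous.tendsto _).comp (hseq_tendsto θo σo σ2 hσo hσ2 z)
    have heq : ∀ᶠ n : ℕ in atTop,
        (∫ x, f ((nd x 0 ((σ2 : ℝ) / n) / nd x θo (σo ^ 2 + (σ2 : ℝ) / n)) /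
          Real.sqrt n) ∂(gaussianReal 0 (σ2 / n)))
        = ∫ z, f (hseq θo σo σ2 n z) ∂(gaussianReal 0 1) := by
      filter_upwards [eventually_ge_atTop 1] with n hn
      have hFmeas : Measurable (fun x : ℝ =>
          (nd x 0 ((σ2 : ℝ) / n) / nd x θo (σo ^ 2 + (σ2 : ℝ) / n)) / Real.sqrt n) :=
        ((nd_measurable _ _).div (nd_measurable _ _)).div_const _
      have hfF : AEStronglyMeasurable (fun x : ℝ =>
          f ((nd x 0 ((σ2 : ℝ) / n) / nd x θo (σo ^ 2 + (σ2 : ℝ) / n)) / Real.sqrt n))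
          ((gaussianReal 0 1).map (fun z => Real.sqrt ((σ2 : ℝ) / n) * z)) :=
        (f.continuous.measurable.comp hFmeas).aestronglyMeasurable
      rw [gauss_scale σ2 hn, integral_map (measurable_const_mul _).aemeasurable hfF]
      refine integral_congr_ae (Eventually.of_forall fun z => ?_)
      exact congrArg (⇑f) (ratio_scaled θo σo σ2 hσo hσ2 hn z)
    rw [integral_map hg.measurable.aemeasurable f.continuous.aestronglyMeasurable]
    exact Tendsto.congr' (heq.mono fun n h => h.symm) key

lemma gauss_tail_tendsto {t : ℕ → ℝ} (ht : Tendsto t atTop atTop) :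
    Tendsto (fun n => (gaussianReal 0 1) {z : ℝ | t n ≤ z ^ 2}) atTop (𝓝 0) := by
  have hmeas : ∀ T : ℕ, NullMeasurableSet {z : ℝ | (T : ℝ) ≤ z ^ 2} (gaussianReal 0 1) := by
    intro T
    exact (measurableSet_le measurable_const (measurable_id.pow_const 2)).nullMeasurableSet
  have hanti : Antitone (fun T : ℕ => {z : ℝ | (T : ℝ) ≤ z ^ 2}) := by
    intro a b hab z hz
    simp only [Set.mem_setOf_eq] at hz ⊢
    exact le_trans (by exact_mod_cast hab) hz
  have hInter : (⋂ T : ℕ, {z : ℝ | (T : ℝ) ≤ z ^ 2}) = ∅ := by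
    ext z
    simp only [Set.mem_iInter, Set.mem_setOf_eq, Set.mem_empty_iff_false, iff_false, not_forall,
      not_le]
    obtain ⟨T, hT⟩ := exists_nat_gt (z ^ 2)
    exact ⟨T, hT⟩
  have hA : Tendsto (fun T : ℕ => (gaussianReal 0 1) {z : ℝ | (T : ℝ) ≤ z ^ 2}) atTop (𝓝 0) := by
    have := tendsto_measure_iInter_atTop (μ := gaussianReal 0 1) hmeas hanti
      ⟨0, measure_ne_top _ _⟩
    rwa [hInter, measure_empty] at this
  rw [ENNReal.tendsto_atTop_zero]
  intro ε hε
  rcases (ENNReal.tendsto_atTop_zero.mp hA) ε hε with ⟨T, hT⟩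
  rcases (tendsto_atTop_atTop.mp ht) (T : ℝ) with ⟨N, hN⟩
  refine ⟨N, fun n hn => ?_⟩
  refine le_trans (measure_mono ?_) (hT T le_rfl)
  intro z hz
  exact le_trans (hN n hn) hz


theorem part1 (θo σo : ℝ) (σ2 : NNReal) (hσo : 0 < σo) (hσ2 : 0 < σ2) (M : ℝ) :
    Tendsto (fun n : ℕ =>
        (gaussianReal 0 (σ2 / n))
          {x | nd x 0 ((σ2 : ℝ) / n) / nd x θo (σo ^ 2 + (σ2 : ℝ) / n) ≤ M})
      atTop (𝓝 0) := by
  have hσ2R : (0:ℝ) < (σ2 : ℝ) := hσ2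
  set M' := max M 1 with hM'def
  have hM'pos : (0:ℝ) < M' := lt_of_lt_of_le one_pos (le_max_right _ _)
  have hcpos : ∀ n : ℕ, 1 ≤ n → 0 < Real.sqrt ((σ2 : ℝ) / n) := by
    intro n hn
    have : (0:ℝ) < (n : ℝ) := by exact_mod_cast hn
    exact Real.sqrt_pos.2 (div_pos hσ2R this)
  have hc0 : Tendsto (fun n : ℕ => Real.sqrt ((σ2 : ℝ) / n)) atTop (𝓝 0) := by
    have h1 : Tendsto (fun n : ℕ => (σ2 : ℝ) / n) atTop (𝓝 0) :=
      tendsto_const_div_atTop_nhds_zero_nat _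
    have h2 := (Real.continuous_sqrt.tendsto 0).comp h1
    rw [Real.sqrt_zero] at h2
    exact h2
  have ht : Tendsto (fun n : ℕ => 2 * Real.log (σo / (M' * Real.sqrt ((σ2 : ℝ) / n))))
      atTop atTop := by
    have h1 : Tendsto (fun n : ℕ => M' * Real.sqrt ((σ2 : ℝ) / n)) atTop (𝓝[>] 0) := by
      apply tendsto_nhdsWithin_of_tendsto_nhds_of_eventually_within
      · have := hc0.const_mul M'
        rwa [mul_zero] at this
      · filter_upwards [eventually_ge_atTop 1] with n hn
        exact mul_pos hM'pos (hcpos n hn)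
    have h2 : Tendsto (fun n : ℕ => σo / (M' * Real.sqrt ((σ2 : ℝ) / n))) atTop atTop := by
      simp only [div_eq_mul_inv]
      exact (h1.inv_tendsto_nhdsGT_zero).const_mul_atTop hσo
    exact (Real.tendsto_log_atTop.comp h2).const_mul_atTop two_pos
  refine tendsto_of_tendsto_of_tendsto_of_le_of_le' tendsto_const_nhds
    (gauss_tail_tendsto ht) (Eventually.of_forall fun n => zero_le) ?_
  filter_upwards [eventually_ge_atTop 1] with n hn
  have hτ : (0:ℝ) < (σ2 : ℝ) / n := div_pos hσ2R (by exact_mod_cast hn)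
  have hs : (0:ℝ) < σo ^ 2 + (σ2 : ℝ) / n := by positivity
  have hcn := hcpos n hn
  rw [gauss_scale σ2 hn, Measure.map_apply (measurable_const_mul _)
    (show MeasurableSet {x : ℝ | nd x 0 ((σ2 : ℝ) / n) / nd x θo (σo ^ 2 + (σ2 : ℝ) / n) ≤ M} from
      measurableSet_le ((nd_measurable _ _).div (nd_measurable _ _)) measurable_const)]
  refine measure_mono ?_
  intro z hz
  simp only [Set.mem_preimage, Set.mem_setOf_eq] at hz ⊢
  rw [nd_ratio _ _ hτ hs] at hz
  have hx2 : (Real.sqrt ((σ2 : ℝ) / n) * z) ^ 2 / (2 * ((σ2 : ℝ) / n)) = z ^ 2 / 2 := by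
    rw [mul_pow, Real.sq_sqrt hτ.le]
    field_simp
  rw [hx2] at hz
  have hlow : σo / Real.sqrt ((σ2 : ℝ) / n) * Real.exp (-(z ^ 2) / 2) ≤ M' := by
    refine le_trans (le_trans ?_ hz) (le_max_left _ _)
    have hsqrt : σo / Real.sqrt ((σ2 : ℝ) / n) ≤
        Real.sqrt ((σo ^ 2 + (σ2 : ℝ) / n) / ((σ2 : ℝ) / n)) := by
      have he : σo / Real.sqrt ((σ2 : ℝ) / n) = Real.sqrt (σo ^ 2 / ((σ2 : ℝ) / n)) := by
        rw [Real.sqrt_div (sq_nonneg σo), Real.sqrt_sq hσo.le]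
      rw [he]
      apply Real.sqrt_le_sqrt
      gcongr
      linarith
    have hexp : Real.exp (-(z ^ 2) / 2) ≤
        Real.exp ((Real.sqrt ((σ2 : ℝ) / n) * z - θo) ^ 2 / (2 * (σo ^ 2 + (σ2 : ℝ) / n))
          - z ^ 2 / 2) := by
      apply Real.exp_le_exp.2
      have h0 : (0:ℝ) ≤ (Real.sqrt ((σ2 : ℝ) / n) * z - θo) ^ 2
          / (2 * (σo ^ 2 + (σ2 : ℝ) / n)) := by positivity
      linarith
    exact mul_le_mul hsqrt hexp (Real.exp_pos _).le (Real.sqrt_nonneg _)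
  have h2 : Real.exp (-(z ^ 2) / 2) ≤ M' * Real.sqrt ((σ2 : ℝ) / n) / σo := by
    rw [le_div_iff₀ hσo]
    calc Real.exp (-(z ^ 2) / 2) * σo
        = σo / Real.sqrt ((σ2 : ℝ) / n) * Real.exp (-(z ^ 2) / 2) * Real.sqrt ((σ2 : ℝ) / n) := by
          field_simp
      _ ≤ M' * Real.sqrt ((σ2 : ℝ) / n) :=
          mul_le_mul_of_nonneg_right hlow (Real.sqrt_nonneg _)
  have h3 : -(z ^ 2) / 2 ≤ Real.log (M' * Real.sqrt ((σ2 : ℝ) / n) / σo) :=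
    (Real.le_log_iff_exp_le (by positivity)).2 h2
  have hlog : Real.log (σo / (M' * Real.sqrt ((σ2 : ℝ) / n)))
      = - Real.log (M' * Real.sqrt ((σ2 : ℝ) / n) / σo) := by
    rw [← Real.log_inv]
    congr 1
    rw [inv_div]
  linarith [hlog, h3]

theorem stmt3 (θo σo : ℝ) (σ2 : NNReal) (hθo : θo ≠ 0) (hσo : 0 < σo) (hσ2 : 0 < σ2) :
    (∀ M : ℝ, Tendsto (fun n : ℕ =>
        (gaussianReal 0 (σ2 / n))
          {x | nd x 0 ((σ2 : ℝ) / n) / nd x θo (σo ^ 2 + (σ2 : ℝ) / n) ≤ M})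
      atTop (𝓝 0)) ∧
    (∃ μlim : Measure ℝ, IsProbabilityMeasure μlim ∧ μlim {x | 0 < x} = 1 ∧
      ∀ f : BoundedContinuousFunction ℝ ℝ,
        Tendsto (fun n : ℕ =>
            ∫ x, f ((nd x 0 ((σ2 : ℝ) / n) / nd x θo (σo ^ 2 + (σ2 : ℝ) / n)) /
              Real.sqrt n) ∂(gaussianReal 0 (σ2 / n)))
          atTop (𝓝 (∫ x, f x ∂μlim))) :=
  ⟨fun M => part1 θo σo σ2 hσo hσ2 M, part2 θo σo σ2 hσo hσ2⟩
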